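/- Let G be a connected weighted graph with weight w and let Φ be a continuous triangle function satisfying the standing conditions (symmetry, monotonicity, Φ(0,0)=0, the identity Φ(x,Φ(y,z))=Φ(z,Φ(x,y)), multiset subadditivity, and Φ(a,b) ≥ max{a,b}). Then d_Φ^w is the greatest element, with respect to pointwise order, of the family of all Φ-pseudosemimetrics ρ on V(G) satisfying ρ(u,v) ≤ w({u,v}) for every edge {u,v}; i.e., d_Φ^w is the subdominant Φ-pseudosemimetric for w. -/

import Mathlib

open scoped NNReal
open SimpleGraph

/-- Iterated triangle function: `PhiStar Φ x [y₁,...,yₖ] = Φ*(x, y₁, ..., yₖ)`. -/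
def PhiStar (Φ : ℝ≥0 → ℝ≥0 → ℝ≥0) : ℝ≥0 → List ℝ≥0 → ℝ≥0
  | x, [] => x
  | x, y :: l => Φ x (PhiStar Φ y l)

/-- `Φ`-weight of a (possibly empty) list of weights. -/
def listPhi (Φ : ℝ≥0 → ℝ≥0 → ℝ≥0) : List ℝ≥0 → ℝ≥0
  | [] => 0
  | x :: l => PhiStar Φ x l

/-- `d` is a `Φ`-pseudosemimetric: symmetric, vanishing on the diagonal, and satisfying
the generalized triangle inequality with triangle function `Φ`. -/
def IsPseudoSemimetricWith {X : Type*} (Φ : ℝ≥0 → ℝ≥0 → ℝ≥0) (d : X → X → ℝ≥0) : Prop :=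
  (∀ x y, d x y = d y x) ∧ (∀ x, d x x = 0) ∧ ∀ x y z, d x y ≤ Φ (d x z) (d y z)

/-- Standing conditions on a continuous triangle function `Φ`. -/
def Standing (Φ : ℝ≥0 → ℝ≥0 → ℝ≥0) : Prop :=
  Continuous (fun q : ℝ≥0 × ℝ≥0 => Φ q.1 q.2) ∧
  (∀ x y, Φ x y = Φ y x) ∧
  (∀ a, Monotone (Φ a)) ∧ (∀ b, Monotone fun a => Φ a b) ∧
  Φ 0 0 = 0 ∧
  (∀ x y z, Φ x (Φ y z) = Φ z (Φ x y)) ∧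
  (∀ (a b c : ℝ≥0) (as bs cs : List ℝ≥0),
      (a ::ₘ (as : Multiset ℝ≥0)) ≤ (b ::ₘ (bs : Multiset ℝ≥0)) + (c ::ₘ (cs : Multiset ℝ≥0)) →
      PhiStar Φ a as ≤ Φ (PhiStar Φ b bs) (PhiStar Φ c cs)) ∧
  (∀ a b, max a b ≤ Φ a b)

/-- The shortest-`Φ`-path function `d_Φ^w`. -/
noncomputable def dPhi {V : Type*} (G : SimpleGraph V) (Φ : ℝ≥0 → ℝ≥0 → ℝ≥0)
    (w : Sym2 V → ℝ≥0) (u v : V) : ℝ≥0 :=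
  sInf {x | ∃ p : G.Walk u v, p.IsPath ∧ listPhi Φ (p.edges.map w) = x}

namespace StandingAux

variable {Φ : ℝ≥0 → ℝ≥0 → ℝ≥0} (hΦ : Standing Φ)
include hΦ

theorem comm (x y : ℝ≥0) : Φ x y = Φ y x := hΦ.2.1 x y
theorem mono (a : ℝ≥0) : Monotone (Φ a) := hΦ.2.2.1 a
theorem mono' (b : ℝ≥0) : Monotone fun a => Φ a b := hΦ.2.2.2.1 b
theorem idtt (x y z : ℝ≥0) : Φ x (Φ y z) = Φ z (Φ x y) := hΦ.2.2.2.2.2.1 x y z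
theorem maxle (a b : ℝ≥0) : max a b ≤ Φ a b := hΦ.2.2.2.2.2.2.2 a b

theorem phi_swap (x y z : ℝ≥0) : Φ x (Φ y z) = Φ y (Φ x z) := by
  rw [idtt hΦ x y z, idtt hΦ y x z, comm hΦ x y]

theorem le_phi_right (a b : ℝ≥0) : b ≤ Φ a b :=
  le_trans (le_max_right a b) (maxle hΦ a b)

theorem le_phi_left (a b : ℝ≥0) : a ≤ Φ a b :=
  le_trans (le_max_left a b) (maxle hΦ a b)

theorem phiStar_cons_swap (x y : ℝ≥0) (l : List ℝ≥0) :
    PhiStar Φ x (y :: l) = Φ y (PhiStar Φ x l) := by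
  cases l with
  | nil => exact comm hΦ x y
  | cons z t => exact phi_swap hΦ x y (PhiStar Φ z t)

theorem phiStar_perm {l₁ l₂ : List ℝ≥0} (h : l₁.Perm l₂) :
    ∀ x, PhiStar Φ x l₁ = PhiStar Φ x l₂ := by
  induction h with
  | nil => intro x; rfl
  | cons y h ih => intro x; show Φ x (PhiStar Φ y _) = Φ x (PhiStar Φ y _); rw [ih y]
  | swap y z l =>
      intro x
      rw [phiStar_cons_swap hΦ, phiStar_cons_swap hΦ, phiStar_cons_swap hΦ,
        phiStar_cons_swap hΦ, phi_swap hΦ]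
  | trans h₁ h₂ ih₁ ih₂ => intro x; rw [ih₁ x, ih₂ x]

theorem listPhi_perm {l₁ l₂ : List ℝ≥0} (h : l₁.Perm l₂) :
    listPhi Φ l₁ = listPhi Φ l₂ := by
  induction h with
  | nil => rfl
  | cons y h ih => exact phiStar_perm hΦ h y
  | swap y z l =>
      show PhiStar Φ z (y :: l) = PhiStar Φ y (z :: l)
      rw [phiStar_cons_swap hΦ]; rfl
  | trans h₁ h₂ ih₁ ih₂ => rw [ih₁, ih₂]

theorem phiStar_sublist {l₁ l₂ : List ℝ≥0} (h : l₁.Sublist l₂) (a : ℝ≥0) :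
    PhiStar Φ a l₁ ≤ PhiStar Φ a l₂ := by
  induction h with
  | slnil => exact le_rfl
  | cons b h ih =>
      refine le_trans ih ?_
      rw [phiStar_cons_swap hΦ]
      exact le_phi_right hΦ _ _
  | cons_cons b h ih =>
      rw [phiStar_cons_swap hΦ, phiStar_cons_swap hΦ]
      exact mono hΦ b ih

theorem listPhi_le_cons (b : ℝ≥0) (l : List ℝ≥0) :
    listPhi Φ l ≤ listPhi Φ (b :: l) := by
  cases l with
  | nil => exact zero_le
  | cons c t => exact le_phi_right hΦ b (PhiStar Φ c t)

theorem listPhi_sublist {l₁ l₂ : List ℝ≥0} (h : l₁.Sublist l₂) :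
    listPhi Φ l₁ ≤ listPhi Φ l₂ := by
  induction h with
  | slnil => exact le_rfl
  | cons b h ih => exact le_trans ih (listPhi_le_cons hΦ b _)
  | cons_cons b h ih => exact phiStar_sublist hΦ h b

theorem listPhi_subperm {l₁ l₂ : List ℝ≥0} (h : l₁.Subperm l₂) :
    listPhi Φ l₁ ≤ listPhi Φ l₂ := by
  obtain ⟨l, hp, hs⟩ := h
  rw [← listPhi_perm hΦ hp]
  exact listPhi_sublist hΦ hs

/-- Main combination lemma. -/
theorem listPhi_combine {l l₁ l₂ : List ℝ≥0}
    (h : (l : Multiset ℝ≥0) ≤ (l₁ : Multiset ℝ≥0) + (l₂ : Multiset ℝ≥0)) :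
    listPhi Φ l ≤ Φ (listPhi Φ l₁) (listPhi Φ l₂) := by
  cases l with
  | nil => exact zero_le
  | cons a as =>
    cases l₁ with
    | nil =>
        have h2 : (a :: as : List ℝ≥0).Subperm l₂ := by
          rw [← Multiset.coe_le]
          simpa using h
        exact le_trans (listPhi_subperm hΦ h2) (le_phi_right hΦ _ _)
    | cons b bs =>
      cases l₂ with
      | nil =>
          have h2 : (a :: as : List ℝ≥0).Subperm (b :: bs) := by
            rw [← Multiset.coe_le]
            simpa using h
          refine le_trans (listPhi_subperm hΦ h2) ?_
          rw [comm hΦ]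
          exact le_phi_right hΦ _ _
      | cons c cs =>
          have := hΦ.2.2.2.2.2.2.1 a b c as bs cs (by simpa using h)
          exact this

end StandingAux

section Graph

open StandingAux Filter Topology

variable {V : Type*} {G : SimpleGraph V} {w : Sym2 V → ℝ≥0}
variable {Φ : ℝ≥0 → ℝ≥0 → ℝ≥0} (hΦ : Standing Φ)

theorem dset_nonempty (hconn : G.Preconnected) (u v : V) :
    {x | ∃ p : G.Walk u v, p.IsPath ∧ listPhi Φ (p.edges.map w) = x}.Nonempty := by
  classical
  obtain ⟨p⟩ := hconn u v
  exact ⟨_, p.bypass, p.bypass_isPath, rfl⟩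

include hΦ

theorem dPhi_le_walk {u v : V} (q : G.Walk u v) :
    dPhi G Φ w u v ≤ listPhi Φ (q.edges.map w) := by
  classical
  refine le_trans (csInf_le' ⟨q.bypass, q.bypass_isPath, rfl⟩) ?_
  apply listPhi_subperm hΦ
  obtain ⟨l, hp, hs⟩ :=
    List.subperm_of_subset q.bypass_isPath.edges_nodup q.edges_bypass_subset
  exact ⟨l.map w, hp.map w, hs.map w⟩

theorem dPhi_symm (u v : V) : dPhi G Φ w u v = dPhi G Φ w v u := by
  unfold dPhi
  congr 1
  ext x
  constructor <;> rintro ⟨p, hp, rfl⟩ <;>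
    exact ⟨p.reverse, hp.reverse, by
      rw [SimpleGraph.Walk.edges_reverse, List.map_reverse]
      exact listPhi_perm hΦ (List.reverse_perm _)⟩

omit hΦ in
theorem dPhi_self (u : V) : dPhi G Φ w u u = 0 :=
  le_antisymm (csInf_le' ⟨SimpleGraph.Walk.nil, SimpleGraph.Walk.IsPath.nil, rfl⟩)
    (zero_le)

theorem dPhi_triangle (hconn : G.Preconnected) (x y z : V) :
    dPhi G Φ w x y ≤ Φ (dPhi G Φ w x z) (dPhi G Φ w y z) := by
  obtain ⟨u, -, hu, hum⟩ := exists_seq_tendsto_sInf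
    (dset_nonempty (Φ := Φ) (w := w) hconn x z) (OrderBot.bddBelow _)
  obtain ⟨v, -, hv, hvm⟩ := exists_seq_tendsto_sInf
    (dset_nonempty (Φ := Φ) (w := w) hconn y z) (OrderBot.bddBelow _)
  have key : ∀ n, dPhi G Φ w x y ≤ Φ (u n) (v n) := by
    intro n
    obtain ⟨p, hp, hpe⟩ := hum n
    obtain ⟨q, hq, hqe⟩ := hvm n
    refine le_trans (dPhi_le_walk hΦ (p.append q.reverse)) ?_
    have h1 : listPhi Φ ((p.append q.reverse).edges.map w) ≤
        Φ (listPhi Φ (p.edges.map w)) (listPhi Φ (q.reverse.edges.map w)) := by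
      refine listPhi_combine hΦ (le_of_eq ?_)
      rw [SimpleGraph.Walk.edges_append, List.map_append]
      exact_mod_cast rfl
    refine le_trans h1 ?_
    have h2 : listPhi Φ (q.reverse.edges.map w) = listPhi Φ (q.edges.map w) := by
      rw [SimpleGraph.Walk.edges_reverse, List.map_reverse]
      exact listPhi_perm hΦ (List.reverse_perm _)
    rw [h2, hpe, hqe]
  have htend : Tendsto (fun n => Φ (u n) (v n)) atTop
      (𝓝 (Φ (dPhi G Φ w x z) (dPhi G Φ w y z))) := by
    have := (hΦ.1.tendsto (dPhi G Φ w x z, dPhi G Φ w y z)).comp (hu.prodMk_nhds hv)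
    exact this
  exact ge_of_tendsto' htend key

theorem dPhi_edge {u v : V} (h : G.Adj u v) : dPhi G Φ w u v ≤ w s(u, v) := by
  simpa [listPhi, PhiStar] using
    dPhi_le_walk hΦ (SimpleGraph.Walk.cons h SimpleGraph.Walk.nil)

theorem rho_le_walk {ρ : V → V → ℝ≥0} (hρ : IsPseudoSemimetricWith Φ ρ)
    (hw : ∀ u v, G.Adj u v → ρ u v ≤ w s(u, v)) :
    ∀ {u v : V} (p : G.Walk u v), ρ u v ≤ listPhi Φ (p.edges.map w) := by
  intro u v p
  induction p with
  | nil => simpa [listPhi] using le_of_eq (hρ.2.1 _)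
  | @cons u b v h q ih =>
    cases q with
    | nil => simpa [listPhi, PhiStar] using hw _ _ h
    | @cons b c v h' q' =>
      have step : ρ u v ≤ Φ (ρ u b) (ρ v b) := hρ.2.2 u v b
      have h2 : ρ v b ≤ listPhi Φ ((SimpleGraph.Walk.cons h' q').edges.map w) := by
        rw [hρ.1 v b]; exact ih
      have h3 : Φ (ρ u b) (ρ v b) ≤
          Φ (w s(u, b)) (listPhi Φ ((SimpleGraph.Walk.cons h' q').edges.map w)) :=
        le_trans (mono hΦ _ h2) (mono' hΦ _ (hw _ _ h))
      refine le_trans step (le_trans h3 (le_of_eq ?_))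
      simp [listPhi, PhiStar, SimpleGraph.Walk.edges_cons]

end Graph

/-- `d_Φ^w` is the subdominant `Φ`-pseudosemimetric: it belongs to the
family `𝔉_Φ^w` of `Φ`-pseudosemimetrics bounded above by `w` on edges, and it is the
greatest element of this family in the pointwise order. -/
theorem stmt_6 {V : Type*} (G : SimpleGraph V) (hconn : G.Preconnected)
    (w : Sym2 V → ℝ≥0) (Φ : ℝ≥0 → ℝ≥0 → ℝ≥0) (hΦ : Standing Φ) :
    IsPseudoSemimetricWith Φ (dPhi G Φ w) ∧
    (∀ u v, G.Adj u v → dPhi G Φ w u v ≤ w s(u, v)) ∧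
    (∀ ρ : V → V → ℝ≥0, IsPseudoSemimetricWith Φ ρ →
      (∀ u v, G.Adj u v → ρ u v ≤ w s(u, v)) →
      ∀ x y, ρ x y ≤ dPhi G Φ w x y) := by
  refine ⟨⟨dPhi_symm hΦ, dPhi_self, dPhi_triangle hΦ hconn⟩,
    fun u v h => dPhi_edge hΦ h, fun ρ hρ hw x y => ?_⟩
  refine le_csInf (dset_nonempty hconn x y) ?_
  rintro b ⟨p, hp, rfl⟩
  exact rho_le_walk hΦ hρ hw p
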